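/- Let μ be a measure on ℝⁿ supported on a uniformly discrete set Λ (i.e. μ = Σ_{λ∈Λ} μ(λ) δ_λ with inf of distances between distinct points of Λ positive). Then μ is a temperate distribution if and only if there exist positive constants C and N such that |μ(λ)| ≤ C(1 + |λ|^N) for all λ ∈ Λ. -/

import Mathlib

open MeasureTheory Filter Metric Set

open SchwartzMap FiniteDimensional
open scoped ENNReal ContDiff

open MeasureTheory Filter Metric Set

variable {E F : Type*} [NormedAddCommGroup E] [NormedSpace ℝ E]
  [NormedAddCommGroup F] [NormedSpace ℝ F]

lemma fderiv_translate (G : E → F) (v x : E) :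
    fderiv ℝ (fun y => G (y - v)) x = fderiv ℝ G (x - v) := by
  by_cases hG : DifferentiableAt ℝ G (x - v)
  · have h1 : HasFDerivAt (fun y => G (y - v)) (fderiv ℝ G (x - v)) x := by
      have := hG.hasFDerivAt.comp x ((hasFDerivAt_id x).sub_const v)
      exact this
    exact h1.fderiv
  · rw [fderiv_zero_of_not_differentiableAt hG,
      fderiv_zero_of_not_differentiableAt]
    intro h
    apply hG
    have h' : DifferentiableAt ℝ (fun y => G (y - v)) (x - v + v) := by
      simpa [sub_add_cancel] using h
    have h2 : DifferentiableAt ℝ (fun y => G ((y + v) - v)) (x - v) :=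
      by have := h'.comp (x - v) ((differentiableAt_id).add_const v); exact this
    simpa [add_sub_cancel_right] using h2

lemma itfd_translate (f : E → F) (v : E) (m : ℕ) :
    iteratedFDeriv ℝ m (fun y => f (y - v)) = fun x => iteratedFDeriv ℝ m f (x - v) := by
  induction m with
  | zero =>
      funext x
      ext u
      simp [iteratedFDeriv_zero_apply]
  | succ m ih =>
      funext x
      rw [iteratedFDeriv_succ_eq_comp_left, iteratedFDeriv_succ_eq_comp_left]
      simp only [Function.comp_apply, ih]
      congr 1
      exact fderiv_translate (iteratedFDeriv ℝ m f) v x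




lemma summable_aux (n : ℕ) (Λ : Set (EuclideanSpace ℝ (Fin n))) (d : ℝ) (hd : 0 < d)
    (hsep : ∀ x ∈ Λ, ∀ y ∈ Λ, x ≠ y → d ≤ dist x y) :
    Summable (fun l : Λ => (1 + ‖(l : EuclideanSpace ℝ (Fin n))‖) ^ (-(n + 1 : ℝ))) := by
  set r : ℝ := (n + 1 : ℝ) with hr
  set ε : ℝ := d / 2 with hε
  have hε0 : 0 < ε := by positivity
  set g' : EuclideanSpace ℝ (Fin n) → ℝ≥0∞ := fun x => ENNReal.ofReal ((1 + ‖x‖) ^ (-r)) with hg'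
  have hg'meas : Measurable g' := by fun_prop
  set ν : Measure (EuclideanSpace ℝ (Fin n)) := volume.withDensity g' with hν
  have hfinrank : (Module.finrank ℝ (EuclideanSpace ℝ (Fin n)) : ℝ) < r := by
    simp [hr, finrank_euclideanSpace_fin]
  have hνuniv : ν univ ≠ ⊤ := by
    rw [hν, withDensity_apply _ MeasurableSet.univ, setLIntegral_univ]
    exact (finite_integral_one_add_norm hfinrank).ne
  set V : ℝ≥0∞ := volume (ball (0 : EuclideanSpace ℝ (Fin n)) ε) with hV
  have hV0 : 0 < V := measure_ball_pos _ _ hε0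
  have hVtop : V ≠ ⊤ := measure_ball_lt_top.ne
  have hVr : 0 < V.toReal := ENNReal.toReal_pos hV0.ne' hVtop
  have hlow : ∀ l : EuclideanSpace ℝ (Fin n), ENNReal.ofReal (((1 + ε) * (1 + ‖l‖)) ^ (-r)) * V ≤ ν (ball l ε) := by
    intro l
    rw [hν, withDensity_apply _ measurableSet_ball]
    have : ∀ x ∈ ball l ε, ENNReal.ofReal (((1 + ε) * (1 + ‖l‖)) ^ (-r)) ≤ g' x := by
      intro x hx
      apply ENNReal.ofReal_le_ofReal
      apply Real.rpow_le_rpow_of_nonpos (by positivity)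
      · have hxl : ‖x‖ ≤ ‖l‖ + ε := by
          have := mem_ball.mp hx
          have : dist x l < ε := this
          calc ‖x‖ ≤ ‖l‖ + dist x l := by
                have := norm_le_norm_add_norm_sub' x l
                simpa [dist_eq_norm] using (norm_le_insert' x l)
            _ ≤ ‖l‖ + ε := by linarith
        nlinarith [norm_nonneg l, norm_nonneg x]
      · rw [neg_nonpos, hr]; positivity
    calc ENNReal.ofReal (((1 + ε) * (1 + ‖l‖)) ^ (-r)) * V
        = ∫⁻ _ in ball l ε, ENNReal.ofReal (((1 + ε) * (1 + ‖l‖)) ^ (-r)) := by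
          rw [setLIntegral_const, Measure.addHaar_ball_center]
      _ ≤ ∫⁻ x in ball l ε, g' x := setLIntegral_mono hg'meas this
  set K : ℝ := (1 + ε) ^ r / V.toReal with hK
  have hK0 : 0 ≤ K := by positivity
  have hterm : ∀ l : EuclideanSpace ℝ (Fin n), (1 + ‖l‖) ^ (-r) ≤ K * (ν (ball l ε)).toReal := by
    intro l
    have h1 := hlow l
    have hble : ν (ball l ε) ≠ ⊤ := (le_trans (measure_mono (subset_univ _))
      (le_of_eq rfl)).trans_lt (lt_of_le_of_ne le_top hνuniv) |>.ne
    have h2 : ((1 + ε) * (1 + ‖l‖)) ^ (-r) * V.toReal ≤ (ν (ball l ε)).toReal := by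
      have := ENNReal.toReal_mono hble h1
      rwa [ENNReal.toReal_mul, ENNReal.toReal_ofReal (by positivity)] at this
    have h3 : ((1 + ε) * (1 + ‖l‖)) ^ (-r) = (1 + ε) ^ (-r) * (1 + ‖l‖) ^ (-r) := by
      rw [Real.mul_rpow (by positivity) (by positivity)]
    have h4 : (1 + ‖l‖) ^ (-r) = (1 + ε) ^ r * (((1 + ε) * (1 + ‖l‖)) ^ (-r)) := by
      rw [h3, ← mul_assoc, ← Real.rpow_add (by positivity), add_neg_cancel, Real.rpow_zero,
        one_mul]
    have h5 : ((1 + ε) * (1 + ‖l‖)) ^ (-r) ≤ (ν (ball l ε)).toReal / V.toReal :=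
      (le_div_iff₀ hVr).mpr h2
    calc (1 + ‖l‖) ^ (-r) = (1 + ε) ^ r * (((1 + ε) * (1 + ‖l‖)) ^ (-r)) := h4
      _ ≤ (1 + ε) ^ r * ((ν (ball l ε)).toReal / V.toReal) :=
          mul_le_mul_of_nonneg_left h5 (by positivity)
      _ = K * (ν (ball l ε)).toReal := by rw [hK]; ring
  apply summable_of_sum_le (c := K * (ν univ).toReal)
  · intro l; positivity
  · intro u
    have hdisj : (↑u : Set Λ).PairwiseDisjoint fun l : Λ => ball (l : EuclideanSpace ℝ (Fin n)) ε := by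
      intro a _ b _ hab
      apply ball_disjoint_ball
      have hne : (a : EuclideanSpace ℝ (Fin n)) ≠ (b : EuclideanSpace ℝ (Fin n)) := Subtype.coe_injective.ne hab
      have := hsep a a.2 b b.2 hne
      rw [hε]; linarith
    have hmeas : ∀ b ∈ u, MeasurableSet (ball ((b : Λ) : EuclideanSpace ℝ (Fin n)) ε) := fun b _ => measurableSet_ball
    have hsum : ∑ l ∈ u, ν (ball ((l : Λ) : EuclideanSpace ℝ (Fin n)) ε) = ν (⋃ l ∈ u, ball ((l : Λ) : EuclideanSpace ℝ (Fin n)) ε) :=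
      (measure_biUnion_finset hdisj hmeas).symm
    calc ∑ l ∈ u, (1 + ‖(l : EuclideanSpace ℝ (Fin n))‖) ^ (-r) ≤ ∑ l ∈ u, K * (ν (ball (l : EuclideanSpace ℝ (Fin n)) ε)).toReal :=
          Finset.sum_le_sum fun l _ => hterm l
      _ = K * (∑ l ∈ u, ν (ball ((l : Λ) : EuclideanSpace ℝ (Fin n)) ε)).toReal := by
          rw [← Finset.mul_sum, ENNReal.toReal_sum]
          intro a _
          exact ((measure_mono (subset_univ _)).trans_lt
            (lt_of_le_of_ne le_top hνuniv)).ne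
      _ = K * (ν (⋃ l ∈ u, ball ((l : Λ) : EuclideanSpace ℝ (Fin n)) ε)).toReal := by rw [hsum]
      _ ≤ K * (ν univ).toReal := by
          apply mul_le_mul_of_nonneg_left _ hK0
          apply ENNReal.toReal_mono hνuniv (measure_mono (subset_univ _))





lemma backward_aux (n : ℕ) (Λ : Set (EuclideanSpace ℝ (Fin n))) (d : ℝ) (hd : 0 < d)
    (hsep : ∀ x ∈ Λ, ∀ y ∈ Λ, x ≠ y → d ≤ dist x y)
    (c : EuclideanSpace ℝ (Fin n) → ℂ) (C N : ℝ) (hC : 0 < C) (hN : 0 < N)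
    (hb : ∀ l ∈ Λ, ‖c l‖ ≤ C * (1 + ‖l‖ ^ N)) :
    ∃ T : SchwartzMap (EuclideanSpace ℝ (Fin n)) ℂ →L[ℂ] ℂ,
      ∀ φ : SchwartzMap (EuclideanSpace ℝ (Fin n)) ℂ,
        HasSum (fun l : Λ => c l * φ l) (T φ) := by
  classical
  set m : ℕ := n + 1 + ⌈N⌉₊ with hm
  set Sup : SchwartzMap (EuclideanSpace ℝ (Fin n)) ℂ → ℝ :=
    fun φ => (Finset.Iic (m, 0)).sup (schwartzSeminormFamily ℂ (EuclideanSpace ℝ (Fin n)) ℂ) φ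
    with hSup
  have hSup0 : ∀ φ, 0 ≤ Sup φ := fun φ => apply_nonneg _ _
  have key : ∀ (φ : SchwartzMap (EuclideanSpace ℝ (Fin n)) ℂ) (l : Λ),
      ‖c l * φ l‖ ≤ (2 * C * 2 ^ m * Sup φ) * (1 + ‖(l : EuclideanSpace ℝ (Fin n))‖) ^ (-(n + 1 : ℝ)) := by
    intro φ l
    set a : ℝ := ‖(l : EuclideanSpace ℝ (Fin n))‖ with ha
    have ha0 : 0 ≤ a := norm_nonneg _
    have h1 : ‖c l‖ ≤ C * (1 + a ^ N) := hb l l.2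
    have h2 : 1 + a ^ N ≤ 2 * (1 + a) ^ N := by
      have e1 : a ^ N ≤ (1 + a) ^ N :=
        Real.rpow_le_rpow ha0 (by linarith) hN.le
      have e2 : (1 : ℝ) ≤ (1 + a) ^ N := Real.one_le_rpow (by linarith) hN.le
      linarith
    have h3 : (1 + a) ^ N ≤ (1 + a) ^ ((⌈N⌉₊ : ℕ) : ℝ) :=
      Real.rpow_le_rpow_of_exponent_le (by linarith) (Nat.le_ceil N)
    have h4 : (1 + a) ^ ((⌈N⌉₊ : ℕ) : ℝ) = (1 + a) ^ ((m : ℝ) + (-(n + 1 : ℝ))) := by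
      congr 1
      rw [hm]; push_cast; ring
    have h5 : (1 + a) ^ ((m : ℝ) + (-(n + 1 : ℝ)))
        = (1 + a) ^ m * (1 + a) ^ (-(n + 1 : ℝ)) := by
      rw [Real.rpow_add (by linarith), Real.rpow_natCast]
    have h6 : (1 + a) ^ m * ‖φ l‖ ≤ 2 ^ m * Sup φ := by
      have := one_add_le_sup_seminorm_apply (𝕜 := ℂ) (m := (m, 0)) (k := m) (n := 0)
        le_rfl le_rfl φ l
      rwa [norm_iteratedFDeriv_zero] at this
    have hφ0 : 0 ≤ ‖φ l‖ := norm_nonneg _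
    have hcl : ‖c l‖ ≤ 2 * C * ((1 + a) ^ m * (1 + a) ^ (-(n + 1 : ℝ))) := by
      rw [← h5, ← h4]
      calc ‖c l‖ ≤ C * (1 + a ^ N) := h1
        _ ≤ C * (2 * (1 + a) ^ N) := by nlinarith
        _ = 2 * C * (1 + a) ^ N := by ring
        _ ≤ 2 * C * (1 + a) ^ ((⌈N⌉₊ : ℕ) : ℝ) := by nlinarith [Real.rpow_nonneg (by linarith : (0:ℝ) ≤ 1 + a) N]
    have hrp : (0:ℝ) ≤ (1 + a) ^ (-(n + 1 : ℝ)) := Real.rpow_nonneg (by linarith) _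
    calc ‖c l * φ l‖ = ‖c l‖ * ‖φ l‖ := norm_mul _ _
      _ ≤ (2 * C * ((1 + a) ^ m * (1 + a) ^ (-(n + 1 : ℝ)))) * ‖φ l‖ :=
          mul_le_mul_of_nonneg_right hcl hφ0
      _ = (2 * C) * ((1 + a) ^ m * ‖φ l‖) * (1 + a) ^ (-(n + 1 : ℝ)) := by ring
      _ ≤ (2 * C) * (2 ^ m * Sup φ) * (1 + a) ^ (-(n + 1 : ℝ)) := by
          apply mul_le_mul_of_nonneg_right _ hrp
          apply mul_le_mul_of_nonneg_left h6 (by positivity)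
      _ = (2 * C * 2 ^ m * Sup φ) * (1 + a) ^ (-(n + 1 : ℝ)) := by ring
  have hsumA := summable_aux n Λ d hd hsep
  have hnorm_sum : ∀ φ : SchwartzMap (EuclideanSpace ℝ (Fin n)) ℂ,
      Summable (fun l : Λ => ‖c l * φ l‖) := by
    intro φ
    apply Summable.of_nonneg_of_le (fun l => norm_nonneg _) (key φ)
    exact hsumA.mul_left _
  have hsummable : ∀ φ : SchwartzMap (EuclideanSpace ℝ (Fin n)) ℂ,
      Summable (fun l : Λ => c l * φ l) := fun φ => (hnorm_sum φ).of_norm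
  set A : ℝ := ∑' l : Λ, (1 + ‖(l : EuclideanSpace ℝ (Fin n))‖) ^ (-(n + 1 : ℝ)) with hA
  have hA0 : 0 ≤ A := tsum_nonneg fun l => Real.rpow_nonneg (by positivity) _
  have hbound : ∀ φ : SchwartzMap (EuclideanSpace ℝ (Fin n)) ℂ,
      ‖∑' l : Λ, c l * φ l‖ ≤ (2 * C * 2 ^ m * A) * Sup φ := by
    intro φ
    calc ‖∑' l : Λ, c l * φ l‖ ≤ ∑' l : Λ, ‖c l * φ l‖ :=
          norm_tsum_le_tsum_norm (hnorm_sum φ)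
      _ ≤ ∑' l : Λ, (2 * C * 2 ^ m * Sup φ) * (1 + ‖(l : EuclideanSpace ℝ (Fin n))‖) ^ (-(n + 1 : ℝ)) :=
          Summable.tsum_le_tsum (key φ) (hnorm_sum φ) (hsumA.mul_left _)
      _ = (2 * C * 2 ^ m * Sup φ) * A := tsum_mul_left
      _ = (2 * C * 2 ^ m * A) * Sup φ := by ring
  refine ⟨SchwartzMap.mkCLMtoNormedSpace (fun φ => ∑' l : Λ, c l * φ l) ?_ ?_ ?_, ?_⟩
  · intro f g
    simp only [SchwartzMap.add_apply]
    rw [← Summable.tsum_add (hsummable f) (hsummable g)]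
    congr 1; funext l; ring
  · intro a f
    simp only [SchwartzMap.smul_apply, RingHom.id_apply, smul_eq_mul]
    rw [← tsum_mul_left]
    congr 1; funext l; ring
  · exact ⟨Finset.Iic (m, 0), 2 * C * 2 ^ m * A, by positivity, hbound⟩
  · intro φ
    exact (hsummable φ).hasSum




variable {E' F' : Type*} [NormedAddCommGroup E'] [NormedSpace ℝ E']
  [NormedAddCommGroup F'] [NormedSpace ℝ F']


variable (n : ℕ)
local notation "EE" => EuclideanSpace ℝ (Fin n)

lemma forward_aux (Λ : Set (EuclideanSpace ℝ (Fin n))) (d : ℝ) (hd : 0 < d)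
    (hsep : ∀ x ∈ Λ, ∀ y ∈ Λ, x ≠ y → d ≤ dist x y)
    (c : EuclideanSpace ℝ (Fin n) → ℂ)
    (T : SchwartzMap (EuclideanSpace ℝ (Fin n)) ℂ →L[ℂ] ℂ)
    (hT : ∀ φ : SchwartzMap (EuclideanSpace ℝ (Fin n)) ℂ,
      HasSum (fun l : Λ => c l * φ l) (T φ)) :
    ∃ C N : ℝ, 0 < C ∧ 0 < N ∧ ∀ l ∈ Λ, ‖c l‖ ≤ C * (1 + ‖l‖ ^ N) := by
  classical
  -- the bump function
  let ψ : ContDiffBump (0 : EuclideanSpace ℝ (Fin n)) := ⟨d / 4, d / 2, by positivity, by linarith⟩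
  let ψc : EuclideanSpace ℝ (Fin n) → ℂ := fun y => (ψ y : ℂ)
  have hψc_smooth : ContDiff ℝ ∞ ψc := Complex.ofRealCLM.contDiff.comp ψ.contDiff
  have hψc_supp : HasCompactSupport ψc :=
    ψ.hasCompactSupport.comp_left (g := fun r : ℝ => (r : ℂ)) (by simp)
  have hψc_tsupp : tsupport ψc ⊆ closedBall (0 : EuclideanSpace ℝ (Fin n)) (d / 2) := by
    have h1 : tsupport ψc ⊆ tsupport ψ :=
      closure_mono (fun x hx => by
        simp only [Function.mem_support, ψc] at hx ⊢
        intro h; apply hx; rw [h]; simp)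
    rw [ψ.tsupport_eq] at h1
    exact h1
  -- bounds on iterated derivatives of the bump
  have hM : ∀ i : ℕ, ∃ Ci : ℝ, ∀ y, ‖iteratedFDeriv ℝ i ψc y‖ ≤ Ci := fun i =>
    (hψc_supp.iteratedFDeriv i).exists_bound_of_continuous
      (hψc_smooth.continuous_iteratedFDeriv (by exact_mod_cast le_top))
  choose M hMle using hM
  have hM0 : ∀ i, 0 ≤ M i := fun i => le_trans (norm_nonneg _) (hMle i 0)
  -- the key pointwise estimate for translates
  have est : ∀ (v : EE) (k i : ℕ) (x : EE),
      ‖x‖ ^ k * ‖iteratedFDeriv ℝ i (fun y => ψc (y - v)) x‖ ≤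
        (1 + ‖v‖ + d / 2) ^ k * M i := by
    intro v k i x
    rw [itfd_translate]
    by_cases hx : iteratedFDeriv ℝ i ψc (x - v) = 0
    · simp only [hx, norm_zero, mul_zero]
      exact mul_nonneg (by positivity) (hM0 i)
    · have hxs : x - v ∈ tsupport ψc := support_iteratedFDeriv_subset i hx
      have hxball : ‖x - v‖ ≤ d / 2 := by
        have := hψc_tsupp hxs
        simpa [mem_closedBall, dist_eq_norm] using this
      have hxn : ‖x‖ ≤ 1 + ‖v‖ + d / 2 := by
        have : ‖x‖ ≤ ‖v‖ + ‖x - v‖ := by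
          simpa [add_comm] using norm_le_insert' x v
        linarith
      apply mul_le_mul
      · exact pow_le_pow_left₀ (norm_nonneg _) hxn k
      · exact hMle i _
      · exact norm_nonneg _
      · positivity
  -- the translated Schwartz functions
  let Φ : EE → SchwartzMap EE ℂ := fun v =>
    { toFun := fun x => ψc (x - v)
      smooth' := hψc_smooth.comp (contDiff_id.sub contDiff_const)
      decay' := fun k i => ⟨(1 + ‖v‖ + d / 2) ^ k * M i, est v k i⟩ }
  have hΦ_apply : ∀ v x, Φ v x = ψc (x - v) := fun v x => rfl
  -- continuity bound for T
  let q : Seminorm ℂ (SchwartzMap EE ℂ) := (normSeminorm ℂ ℂ).comp T.toLinearMap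
  have hqc : Continuous q := by
    have : (q : SchwartzMap EE ℂ → ℝ) = fun φ => ‖T φ‖ := rfl
    rw [show (⇑q) = fun φ => ‖T φ‖ from rfl] at *
    exact T.continuous.norm
  obtain ⟨s, C₀, hC₀ne, hq⟩ := Seminorm.bound_of_continuous (schwartz_withSeminorms ℂ EE ℂ) q hqc
  have hqle : ∀ φ, ‖T φ‖ ≤ (C₀ : ℝ) * (s.sup (schwartzSeminormFamily ℂ EE ℂ)) φ := by
    intro φ
    have := hq φ
    simpa [Seminorm.comp_apply, NNReal.smul_def, smul_eq_mul, q] using this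
  -- constants
  set K : ℕ := s.sup Prod.fst + 1 with hK
  have hK1 : 1 ≤ K := by omega
  set Mx : ℝ := ∑ p ∈ s, M p.2 with hMx
  have hMx0 : 0 ≤ Mx := Finset.sum_nonneg fun p _ => hM0 p.2
  -- seminorm bounds for Φ v
  have hsem : ∀ (v : EE) (k i : ℕ),
      SchwartzMap.seminorm ℂ k i (Φ v) ≤ (1 + ‖v‖ + d / 2) ^ k * M i := by
    intro v k i
    apply SchwartzMap.seminorm_le_bound ℂ k i (Φ v) (mul_nonneg (by positivity) (hM0 i))
    intro x
    exact est v k i x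
  have hsup : ∀ v : EE, (s.sup (schwartzSeminormFamily ℂ EE ℂ)) (Φ v) ≤
      ((1 + d / 2) * (1 + ‖v‖)) ^ K * Mx := by
    intro v
    apply Seminorm.finset_sup_apply_le (mul_nonneg (by positivity) hMx0)
    intro p hp
    have h1 : schwartzSeminormFamily ℂ EE ℂ p (Φ v) ≤ (1 + ‖v‖ + d / 2) ^ p.1 * M p.2 :=
      hsem v p.1 p.2
    have h2 : (1 + ‖v‖ + d / 2) ^ p.1 ≤ ((1 + d / 2) * (1 + ‖v‖)) ^ K := by
      have hb : (1 + ‖v‖ + d / 2) ≤ (1 + d / 2) * (1 + ‖v‖) := by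
        nlinarith [norm_nonneg v]
      have hb1 : (1 : ℝ) ≤ (1 + d / 2) * (1 + ‖v‖) := by nlinarith [norm_nonneg v]
      calc (1 + ‖v‖ + d / 2) ^ p.1 ≤ ((1 + d / 2) * (1 + ‖v‖)) ^ p.1 :=
            pow_le_pow_left₀ (by positivity) hb p.1
        _ ≤ ((1 + d / 2) * (1 + ‖v‖)) ^ K := by
            apply pow_le_pow_right₀ hb1
            have := Finset.le_sup (f := Prod.fst) hp
            omega
    have h3 : M p.2 ≤ Mx := Finset.single_le_sum (f := fun p : ℕ × ℕ => M p.2)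
      (fun p _ => hM0 p.2) hp
    calc schwartzSeminormFamily ℂ EE ℂ p (Φ v) ≤ (1 + ‖v‖ + d / 2) ^ p.1 * M p.2 := h1
      _ ≤ ((1 + d / 2) * (1 + ‖v‖)) ^ K * Mx := by
          apply mul_le_mul h2 h3 (hM0 p.2) (by positivity)
  -- evaluation of T on translates
  have hval : ∀ l (hl : l ∈ Λ), T (Φ l) = c l := by
    intro l hl
    have h1 : HasSum (fun p : Λ => c p * (Φ l) p) (T (Φ l)) := hT _
    have hone : (Φ l) l = 1 := by
      rw [hΦ_apply, sub_self]
      have : ψ 0 = 1 := ψ.one_of_mem_closedBall (by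
        simp [mem_closedBall, dist_self]; positivity)
      simp [ψc, this]
    have hzero : ∀ p : Λ, p ≠ (⟨l, hl⟩ : Λ) → c p * (Φ l) p = 0 := by
      intro p hp
      have hne : (p : EE) ≠ l := fun h => hp (Subtype.ext h)
      have hdist : d ≤ dist (p : EE) l := hsep p p.2 l hl hne
      have : ψ ((p : EE) - l) = 0 := ψ.zero_of_le_dist (by
        simp only [dist_eq_norm, sub_zero]
        calc (d / 2 : ℝ) ≤ d := by linarith
          _ ≤ dist (p : EE) l := hdist
          _ = ‖(p : EE) - l‖ := dist_eq_norm _ _)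
      rw [hΦ_apply]
      simp [ψc, this]
    have h2 : HasSum (fun p : Λ => c p * (Φ l) p) (c l * (Φ l) l) :=
      hasSum_single (⟨l, hl⟩ : Λ) hzero
    rw [hone, mul_one] at h2
    exact h1.unique h2
  -- conclusion
  refine ⟨(C₀ : ℝ) * Mx * ((1 + d / 2) ^ K * 2 ^ K) + 1, (K : ℝ),
    by positivity, by exact_mod_cast Nat.pos_of_ne_zero (by omega), ?_⟩
  intro l hl
  have hb1 : ‖c l‖ ≤ (C₀ : ℝ) * (((1 + d / 2) * (1 + ‖l‖)) ^ K * Mx) := by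
    rw [← hval l hl]
    exact (hqle (Φ l)).trans (by
      apply mul_le_mul_of_nonneg_left (hsup l) (NNReal.coe_nonneg C₀))
  have hb2 : (1 + ‖l‖) ^ K ≤ 2 ^ K * (1 + ‖l‖ ^ K) := by
    rcases le_total (‖l‖) 1 with h | h
    · calc (1 + ‖l‖) ^ K ≤ (2 : ℝ) ^ K := pow_le_pow_left₀ (by positivity) (by linarith) K
        _ ≤ 2 ^ K * (1 + ‖l‖ ^ K) := by
            nlinarith [pow_nonneg (norm_nonneg l) K, pow_pos (show (0:ℝ) < 2 by norm_num) K]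
    · calc (1 + ‖l‖) ^ K ≤ (2 * ‖l‖) ^ K := pow_le_pow_left₀ (by positivity) (by linarith) K
        _ = 2 ^ K * ‖l‖ ^ K := mul_pow 2 (‖l‖) K
        _ ≤ 2 ^ K * (1 + ‖l‖ ^ K) := by
            nlinarith [pow_pos (show (0:ℝ) < 2 by norm_num) K, pow_nonneg (norm_nonneg l) K]
  have hrpow : ‖l‖ ^ ((K : ℕ) : ℝ) = ‖l‖ ^ (K : ℕ) := Real.rpow_natCast _ _
  rw [hrpow]
  calc ‖c l‖ ≤ (C₀ : ℝ) * (((1 + d / 2) * (1 + ‖l‖)) ^ K * Mx) := hb1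
    _ = (C₀ : ℝ) * Mx * ((1 + d / 2) ^ K * (1 + ‖l‖) ^ K) := by rw [mul_pow]; ring
    _ ≤ (C₀ : ℝ) * Mx * ((1 + d / 2) ^ K * (2 ^ K * (1 + ‖l‖ ^ K))) := by
        apply mul_le_mul_of_nonneg_left _ (by positivity)
        apply mul_le_mul_of_nonneg_left hb2 (by positivity)
    _ = ((C₀ : ℝ) * Mx * ((1 + d / 2) ^ K * 2 ^ K)) * (1 + ‖l‖ ^ K) := by ring
    _ ≤ ((C₀ : ℝ) * Mx * ((1 + d / 2) ^ K * 2 ^ K) + 1) * (1 + ‖l‖ ^ K) := by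
        apply mul_le_mul_of_nonneg_right _ (by positivity)
        linarith


/-- A pure point measure `μ = ∑_{λ∈Λ} c(λ) δ_λ` on ℝⁿ with uniformly
discrete support `Λ` is a temperate distribution iff its atoms have polynomial growth. -/
theorem stmt0 (n : ℕ) (Λ : Set (EuclideanSpace ℝ (Fin n)))
    (hΛ : ∃ d > 0, ∀ x ∈ Λ, ∀ y ∈ Λ, x ≠ y → d ≤ dist x y)
    (c : EuclideanSpace ℝ (Fin n) → ℂ)
    (hc : ∀ l ∈ Λ, c l ≠ 0) :
    (∃ T : SchwartzMap (EuclideanSpace ℝ (Fin n)) ℂ →L[ℂ] ℂ,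
        ∀ φ : SchwartzMap (EuclideanSpace ℝ (Fin n)) ℂ,
          HasSum (fun l : Λ => c l * φ l) (T φ)) ↔
      (∃ C N : ℝ, 0 < C ∧ 0 < N ∧ ∀ l ∈ Λ, ‖c l‖ ≤ C * (1 + ‖l‖ ^ N)) := by
  obtain ⟨d, hd, hsep⟩ := hΛ
  constructor
  · rintro ⟨T, hT⟩
    exact forward_aux n Λ d hd hsep c T hT
  · rintro ⟨C, N, hC, hN, hb⟩
    exact backward_aux n Λ d hd hsep c C N hC hN hb
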